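/- arXiv:2406.10820 — 3 statements merged into one kernel-verified Lean document; each statement's English description precedes it below -/
import Mathlib

section
/- Let x ∈ ℚ ∩ [0,1). For every n ≥ 0 the determinant of the 2×2 matrix with rows (Q_n(z), P_n(z)) and (Q_{n+1}(z), P_{n+1}(z)) is a nonzero polynomial in z. -/
open Polynomial Filter

noncomputable section

/-- Pochhammer symbol `(a)_m = a(a+1)⋯(a+m−1)`. -/
def poch (a : ℚ) (m : ℕ) : ℚ := (ascPochhammer ℚ m).eval a

/-- The Padé denominator `Q_n` as a polynomial in `ℚ[z]`. -/
def Qpoly (x : ℚ) (n : ℕ) : Polynomial ℚ :=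
  ∑ l ∈ Finset.range (n + 1),
    Polynomial.C ((-1 : ℚ) ^ l * poch ((n : ℚ) + 1 + x) (n - l) / (Nat.factorial (n - l)) *
        poch (((n - l : ℕ) : ℚ) + 1 + x) l / (Nat.factorial l)) * Polynomial.X ^ (n - l)

/-- The Padé numerator `P_n` as a polynomial in `ℚ[z]`. -/
def Ppoly (x : ℚ) (n : ℕ) : Polynomial ℚ :=
  ∑ l ∈ Finset.range n,
    Polynomial.C (∑ k ∈ Finset.Ico l n,
        (-1 : ℚ) ^ (n - k - 1) * poch ((n : ℚ) + 1 + x) (k + 1) / (Nat.factorial (k + 1)) *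
          poch ((k : ℚ) + 2 + x) (n - k - 1) / (Nat.factorial (n - k - 1)) *
          (1 + x) / ((k : ℚ) - (l : ℚ) + 1 + x)) * Polynomial.X ^ l

open Finset in
section
open Finset

lemma poch_zero (a : ℚ) : poch a 0 = 1 := by simp [poch]

lemma poch_succ (a : ℚ) (m : ℕ) : poch a (m+1) = poch a m * (a + m) := by
  simp [poch, ascPochhammer_succ_right]

lemma poch_succ_left (a : ℚ) (m : ℕ) : poch a (m+1) = a * poch (a+1) m := by
  simp [poch, ascPochhammer_succ_left, eval_comp]

lemma poch_pos {a : ℚ} (ha : 0 < a) (m : ℕ) : 0 < poch a m := by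
  induction m with
  | zero => simp [poch_zero]
  | succ m ih => rw [poch_succ]; positivity

lemma poch_mul_poch (a : ℚ) (n m : ℕ) : poch a n * poch (a + n) m = poch a (n + m) := by
  have := congrArg (Polynomial.eval a) (ascPochhammer_mul ℚ n m)
  simpa [poch, eval_comp] using this

lemma poch_one (n : ℕ) : poch 1 n = n.factorial := by
  simp [poch, ascPochhammer_eval_one]

lemma poch_two (n : ℕ) : poch 2 n = (n+1).factorial := by
  have h := poch_succ_left 1 n
  rw [poch_one] at h
  norm_num at h
  rw [← h]

lemma poch_diff (a : ℚ) (m : ℕ) :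
    poch (a+1) (m+1) - poch a (m+1) = (m+1) * poch (a+1) m := by
  rw [poch_succ, poch_succ_left]; ring

lemma alt_step (f : ℕ → ℚ) (n : ℕ) :
    ∑ j ∈ range (n+2), (-1:ℚ)^j * ((n+1).choose j) * f j
      = (∑ j ∈ range (n+1), (-1:ℚ)^j * (n.choose j) * f j)
        - ∑ j ∈ range (n+1), (-1:ℚ)^j * (n.choose j) * f (j+1) := by
  rw [Finset.sum_range_succ' (fun j => (-1:ℚ)^j * ((n+1).choose j) * f j) (n+1)]
  have h1 : ∀ j ∈ range (n+1), (-1:ℚ)^(j+1) * ((n+1).choose (j+1)) * f (j+1)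
      = -((-1:ℚ)^j * (n.choose j) * f (j+1)) - (-1:ℚ)^j * (n.choose (j+1)) * f (j+1) := by
    intro j _
    rw [Nat.choose_succ_succ]
    push_cast
    ring
  rw [Finset.sum_congr rfl h1, Finset.sum_sub_distrib, Finset.sum_neg_distrib]
  have h2 : ∑ j ∈ range (n+1), (-1:ℚ)^j * (n.choose j) * f j
      = (-1:ℚ)^0 * (n.choose 0) * f 0 + ∑ j ∈ range n, (-1:ℚ)^(j+1) * (n.choose (j+1)) * f (j+1) := by
    rw [Finset.sum_range_succ' (fun j => (-1:ℚ)^j * (n.choose j) * f j) n]; ring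
  have h3 : ∑ j ∈ range (n+1), (-1:ℚ)^j * (n.choose (j+1)) * f (j+1)
      = ∑ j ∈ range n, (-1:ℚ)^j * (n.choose (j+1)) * f (j+1) := by
    rw [Finset.sum_range_succ]; simp
  rw [h2, h3]
  have h4 : ∑ j ∈ range n, (-1:ℚ)^(j+1) * (n.choose (j+1)) * f (j+1)
      = -∑ j ∈ range n, (-1:ℚ)^j * (n.choose (j+1)) * f (j+1) := by
    rw [← Finset.sum_neg_distrib]
    exact Finset.sum_congr rfl (by intro j _; ring)
  rw [h4]; simp; ring

def Kk (c : ℚ) (m n : ℕ) : ℚ := ∑ j ∈ range (n+1), (-1:ℚ)^j * (n.choose j) * poch (c + j) m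

lemma Kk_step (c : ℚ) (m n : ℕ) : Kk c m (n+1) = Kk c m n - Kk (c+1) m n := by
  unfold Kk
  rw [alt_step (fun j => poch (c + j) m) n]
  congr 1
  refine Finset.sum_congr rfl ?_
  intro j _
  have h : c + (((j:ℕ)+1 : ℕ) : ℚ) = (c+1) + j := by push_cast; ring
  simp only [h]

lemma Kk_diff (c : ℚ) (m n : ℕ) :
    Kk c (m+1) n - Kk (c+1) (m+1) n = -((m+1 : ℚ) * Kk (c+1) m n) := by
  unfold Kk
  rw [← Finset.sum_sub_distrib, Finset.mul_sum, ← Finset.sum_neg_distrib]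
  refine Finset.sum_congr rfl ?_
  intro j _
  have hd := poch_diff (c + j) m
  have h : c + (j:ℚ) + 1 = c + 1 + j := by ring
  rw [h] at hd
  linear_combination (-((-1:ℚ)^j * (n.choose j))) * hd

lemma Kk_zero : ∀ n m : ℕ, m < n → ∀ c : ℚ, Kk c m n = 0 := by
  intro n
  induction n with
  | zero => intro m hm; omega
  | succ n ih =>
    intro m hm c
    rw [Kk_step]
    match m with
    | 0 =>
      have : Kk c 0 n = Kk (c+1) 0 n := by
        unfold Kk
        refine Finset.sum_congr rfl ?_
        intro j _
        simp [poch_zero]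
      rw [this]; ring
    | m'+1 =>
      rw [Kk_diff, ih m' (by omega) (c+1)]
      ring

lemma Kk_top_diff (c : ℚ) (n : ℕ) : Kk c n n - Kk (c+1) n n = 0 := by
  match n with
  | 0 =>
    have : Kk c 0 0 = Kk (c+1) 0 0 := by unfold Kk; simp [poch_zero]
    rw [this]; ring
  | m+1 =>
    rw [Kk_diff, Kk_zero (m+1) m (by omega) (c+1)]
    ring

def G (x : ℚ) (n : ℕ) : ℚ :=
  ∑ j ∈ range (n+1), (-1:ℚ)^j * (n.choose j) * poch (x + j + 1) n / (x + j)

lemma G_step (x : ℚ) (hx : 0 < x) (n : ℕ) :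
    G x (n+1) = (n+1) * (G x n - G (x+1) n) := by
  have key : ∀ y : ℚ, 0 < y →
      ∑ j ∈ range (n+1), (-1:ℚ)^j * (n.choose j) * (poch (y + j + 1) (n+1) / (y + j))
      = Kk (y+1) n n + (n+1) * ∑ j ∈ range (n+1), (-1:ℚ)^j * (n.choose j) * (poch (y + j + 1) n / (y + j)) := by
    intro y hy
    have hK : Kk (y+1) n n = ∑ j ∈ range (n+1), (-1:ℚ)^j * (n.choose j) * poch (y + j + 1) n := by
      unfold Kk
      refine Finset.sum_congr rfl ?_
      intro j _
      have h : y + 1 + (j:ℚ) = y + j + 1 := by ring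
      rw [h]
    rw [hK, Finset.mul_sum, ← Finset.sum_add_distrib]
    refine Finset.sum_congr rfl ?_
    intro j _
    have hyj : y + (j:ℚ) ≠ 0 := by positivity
    have hp : poch (y + j + 1) (n+1) = poch (y + j + 1) n * (y + j) + (n+1) * poch (y + j + 1) n := by
      rw [poch_succ]; ring
    rw [hp]
    field_simp
  unfold G
  simp only [mul_div_assoc]
  rw [alt_step (fun j => poch (x + j + 1) (n+1) / (x + j)) n]
  have h2 : ∀ j ∈ range (n+1), (-1:ℚ)^j * (n.choose j) * (poch (x + ((j+1 : ℕ):ℚ) + 1) (n+1) / (x + ((j+1:ℕ):ℚ)))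
      = (-1:ℚ)^j * (n.choose j) * (poch ((x+1) + j + 1) (n+1) / ((x+1) + j)) := by
    intro j _
    have h : x + ((j+1 : ℕ):ℚ) = (x+1) + j := by push_cast; ring
    rw [h]
  rw [Finset.sum_congr rfl h2, key x hx, key (x+1) (by linarith)]
  have h3 : x + 1 + 1 = x + 2 := by ring
  have h4 := Kk_top_diff (x+1) n
  rw [h3] at h4
  rw [h3]
  linear_combination h4

lemma Gval (n : ℕ) : ∀ x : ℚ, 0 < x → G x n = (n.factorial : ℚ)^2 / (x * poch (x+1) n) := by
  induction n with
  | zero =>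
    intro x hx
    unfold G
    simp [poch_zero]
  | succ n ih =>
    intro x hx
    rw [G_step x hx n, ih x hx, ih (x+1) (by linarith)]
    have h1 : poch (x+1) (n+1) = poch (x+1) n * (x+1+n) := poch_succ _ _
    have h2 : poch (x+1+1) n = poch (x+1) n * (x+1+n) / (x+1) := by
      have := poch_succ_left (x+1) n
      rw [h1] at this
      field_simp at this ⊢
      linarith [this]
    rw [h2, h1]
    have p1 : (0:ℚ) < poch (x+1) n := poch_pos (by linarith) n
    have hf : ((n+1).factorial : ℚ) = (n.factorial : ℚ) * (n+1) := by
      rw [Nat.factorial_succ]; push_cast; ring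
    rw [hf]
    have hx1 : (0:ℚ) < x + 1 := by linarith
    have hxn : (0:ℚ) < x + 1 + n := by positivity
    field_simp
    ring

def Hh : ℕ → ℚ
  | 0 => 0
  | n+1 => Hh n + 1/(n+1)

lemma G_decomp (y : ℚ) (hy : 0 < y) (n : ℕ) :
    ∑ j ∈ range (n+1), (-1:ℚ)^j * (n.choose j) * (poch (y + j + 1) (n+1) / (y + j))
      = Kk (y+1) n n + (n+1) * ∑ j ∈ range (n+1), (-1:ℚ)^j * (n.choose j) * (poch (y + j + 1) n / (y + j)) := by
  have hK : Kk (y+1) n n = ∑ j ∈ range (n+1), (-1:ℚ)^j * (n.choose j) * poch (y + j + 1) n := by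
    unfold Kk
    refine Finset.sum_congr rfl ?_
    intro j _
    have h : y + 1 + (j:ℚ) = y + j + 1 := by ring
    rw [h]
  rw [hK, Finset.mul_sum, ← Finset.sum_add_distrib]
  refine Finset.sum_congr rfl ?_
  intro j _
  have hyj : y + (j:ℚ) ≠ 0 := by positivity
  have hp : poch (y + j + 1) (n+1) = poch (y + j + 1) n * (y + j) + (n+1) * poch (y + j + 1) n := by
    rw [poch_succ]; ring
  rw [hp]
  field_simp

lemma G_decomp0 (n : ℕ) :
    ∑ j ∈ range (n+1), (-1:ℚ)^j * (n.choose j) * (poch ((0:ℚ) + j + 1) (n+1) / ((0:ℚ) + j))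
      = Kk 1 n n - n.factorial
        + (n+1) * ∑ j ∈ range (n+1), (-1:ℚ)^j * (n.choose j) * (poch ((0:ℚ) + j + 1) n / ((0:ℚ) + j)) := by
  have hK : Kk 1 n n = ∑ j ∈ range (n+1), (-1:ℚ)^j * (n.choose j) * poch ((0:ℚ) + j + 1) n := by
    unfold Kk
    refine Finset.sum_congr rfl ?_
    intro j _
    have h : (1:ℚ) + (j:ℚ) = (0:ℚ) + j + 1 := by ring
    rw [h]
  have hsum : ∑ j ∈ range (n+1), ((-1:ℚ)^j * (n.choose j) * (poch ((0:ℚ)+j+1) (n+1) / ((0:ℚ)+j))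
      - (-1:ℚ)^j * (n.choose j) * poch ((0:ℚ)+j+1) n
      - (n+1) * ((-1:ℚ)^j * (n.choose j) * (poch ((0:ℚ)+j+1) n / ((0:ℚ)+j))))
      = - (n.factorial : ℚ) := by
    rw [Finset.sum_eq_single 0]
    · have h1 : (0:ℚ) + (0:ℕ) + 1 = 1 := by push_cast; ring
      rw [h1]
      simp [poch_one]
    · intro j _ hj
      have hj1 : 1 ≤ j := Nat.one_le_iff_ne_zero.mpr hj
      have hj0 : (0:ℚ) + (j:ℚ) ≠ 0 := by
        have : (1:ℚ) ≤ (j:ℚ) := by exact_mod_cast hj1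
        linarith
      have hp : poch ((0:ℚ)+j+1) (n+1) = poch ((0:ℚ)+j+1) n * ((0:ℚ)+j) + (n+1) * poch ((0:ℚ)+j+1) n := by
        rw [poch_succ]; ring
      rw [hp]
      field_simp
      ring
    · intro h
      exact absurd (Finset.mem_range.mpr (by omega)) h
  rw [Finset.sum_sub_distrib, Finset.sum_sub_distrib, ← hK, ← Finset.mul_sum] at hsum
  linarith [hsum]

lemma G_step0 (n : ℕ) :
    G 0 (n+1) = (n+1) * (G 0 n - G 1 n) - n.factorial := by
  unfold G
  simp only [mul_div_assoc]
  rw [alt_step (fun j => poch ((0:ℚ) + j + 1) (n+1) / ((0:ℚ) + j)) n]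
  have h2 : ∀ j ∈ range (n+1), (-1:ℚ)^j * (n.choose j) * (poch ((0:ℚ) + ((j+1 : ℕ):ℚ) + 1) (n+1) / ((0:ℚ) + ((j+1:ℕ):ℚ)))
      = (-1:ℚ)^j * (n.choose j) * (poch ((1:ℚ) + j + 1) (n+1) / ((1:ℚ) + j)) := by
    intro j _
    have h : (0:ℚ) + ((j+1 : ℕ):ℚ) = (1:ℚ) + j := by push_cast; ring
    rw [h]
  rw [Finset.sum_congr rfl h2, G_decomp0 n, G_decomp 1 (by norm_num) n]
  have h4 := Kk_top_diff 1 n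
  linear_combination h4

lemma Gval0 (n : ℕ) : G 0 n = -(2 * Hh n * n.factorial) := by
  induction n with
  | zero =>
    unfold G Hh
    simp [poch_zero]
  | succ n ih =>
    rw [G_step0 n, ih, Gval n 1 (by norm_num)]
    have h2 : poch (1+1) n = ((n+1).factorial : ℚ) := by
      have := poch_two n
      norm_num at this ⊢
      rw [← this]
    rw [h2]
    have hf : ((n+1).factorial : ℚ) = (n.factorial : ℚ) * (n+1) := by
      rw [Nat.factorial_succ]; push_cast; ring
    have hH : Hh (n+1) = Hh n + 1/(n+1) := rfl
    rw [hH, hf]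
    have h5 : ((n:ℚ)+1) ≠ 0 := by positivity
    field_simp
    ring

lemma qEval (x : ℚ) (n : ℕ) :
    (Qpoly x n).eval 0 = (-1:ℚ)^n * poch (x+1) n / n.factorial := by
  unfold Qpoly
  rw [Polynomial.eval_finset_sum]
  rw [Finset.sum_eq_single n]
  · simp only [Nat.sub_self, Nat.cast_zero, Nat.factorial_zero]
    have h1 : (0:ℚ) + 1 + x = x + 1 := by ring
    have h2 : poch ((n:ℚ) + 1 + x) 0 = 1 := by
      simp [poch]
    rw [Polynomial.eval_mul, Polynomial.eval_C, Polynomial.eval_pow, Polynomial.eval_X, h1, h2]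
    norm_num
  · intro l hl hln
    have h : n - l ≠ 0 := by
      rw [Finset.mem_range] at hl; omega
    rw [Polynomial.eval_mul, Polynomial.eval_pow, Polynomial.eval_X, zero_pow h]
    ring
  · intro h
    exact absurd (Finset.mem_range.mpr (by omega)) h

lemma pEval (x : ℚ) (hx : 0 ≤ x) (n : ℕ) :
    (Ppoly x n).eval 0 = (-1:ℚ)^n * (1+x) / n.factorial * (G x n - poch (x+1) n / x) := by
  have hG : G x n - poch (x+1) n / x
      = ∑ j ∈ range n, (-1:ℚ)^(j+1) * (n.choose (j+1)) * poch (x + ((j+1:ℕ):ℚ) + 1) n / (x + ((j+1:ℕ):ℚ)) := by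
    unfold G
    rw [Finset.sum_range_succ' (fun j => (-1:ℚ)^j * (n.choose j) * poch (x + j + 1) n / (x + j)) n]
    have h0 : (-1:ℚ)^0 * ((n.choose 0 : ℕ):ℚ) * poch (x + ((0:ℕ):ℚ) + 1) n / (x + ((0:ℕ):ℚ))
        = poch (x+1) n / x := by
      have h : x + ((0:ℕ):ℚ) + 1 = x + 1 := by push_cast; ring
      have h' : x + ((0:ℕ):ℚ) = x := by push_cast; ring
      rw [h, h']
      norm_num
    rw [h0]
    ring
  rw [hG]
  unfold Ppoly
  rw [Polynomial.eval_finset_sum]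
  rw [Finset.sum_eq_single 0]
  · rcases Nat.eq_zero_or_pos n with hn | hn
    · subst hn; simp
    · rw [Polynomial.eval_mul, Polynomial.eval_C, Polynomial.eval_pow, Polynomial.eval_X]
      rw [pow_zero, mul_one]
      have hIco : Finset.Ico 0 n = Finset.range n := by
        rw [Finset.range_eq_Ico]
      rw [hIco, Finset.mul_sum]
      refine Finset.sum_congr rfl ?_
      intro k hk
      rw [Finset.mem_range] at hk
      -- signs
      have hs : (-1:ℚ)^(n-k-1) = (-1:ℚ)^n * (-1:ℚ)^(k+1) := by
        have : (-1:ℚ)^(n-k-1) * (-1:ℚ)^(k+1) = (-1:ℚ)^n := by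
          rw [← pow_add]
          congr 1
          omega
        have h4 : ((-1:ℚ)^(k+1)) * ((-1:ℚ)^(k+1)) = 1 := by
          rw [← pow_add, Even.neg_one_pow ⟨k+1, by ring⟩]
        calc (-1:ℚ)^(n-k-1) = (-1:ℚ)^(n-k-1) * (((-1:ℚ)^(k+1)) * ((-1:ℚ)^(k+1))) := by rw [h4]; ring
          _ = (-1:ℚ)^n * (-1:ℚ)^(k+1) := by rw [← mul_assoc, this]
      -- pochhammer merge
      have hcast : ((n-k-1 : ℕ):ℚ) = (n:ℚ) - k - 1 := by
        have h5 : n - k - 1 = n - (k+1) := by omega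
        rw [h5, Nat.cast_sub (by omega : k+1 ≤ n)]
        push_cast; ring
      have hm : poch ((k:ℚ)+2+x) (n-k-1) * poch ((n:ℚ)+1+x) (k+1) = poch ((k:ℚ)+2+x) n := by
        have := poch_mul_poch ((k:ℚ)+2+x) (n-k-1) (k+1)
        rw [hcast] at this
        have h6 : (k:ℚ)+2+x + ((n:ℚ) - k - 1) = (n:ℚ)+1+x := by ring
        rw [h6] at this
        rw [this]
        congr 1
        omega
      -- factorial
      have hf : ((n.choose (k+1) : ℕ):ℚ) * (k+1).factorial * (n-k-1).factorial = n.factorial := by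
        have h7 : n - k - 1 = n - (k+1) := by omega
        rw [h7]
        exact_mod_cast congrArg (Nat.cast (R := ℚ)) (Nat.choose_mul_factorial_mul_factorial (by omega : k+1 ≤ n))
      -- denominators
      have hd1 : ((k:ℚ) - ((0:ℕ):ℚ) + 1 + x) = x + ((k+1:ℕ):ℚ) := by push_cast; ring
      have hd2 : poch (x + ((k+1:ℕ):ℚ) + 1) n = poch ((k:ℚ)+2+x) n := by
        have : x + ((k+1:ℕ):ℚ) + 1 = (k:ℚ)+2+x := by push_cast; ring
        rw [this]
      rw [hd1, hd2, hs, ← hm]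
      have hne1 : ((k+1).factorial : ℚ) ≠ 0 := by exact_mod_cast (Nat.factorial_pos (k+1)).ne'
      have hne2 : ((n-k-1).factorial : ℚ) ≠ 0 := by exact_mod_cast (Nat.factorial_pos (n-k-1)).ne'
      have hne3 : (n.factorial : ℚ) ≠ 0 := by exact_mod_cast (Nat.factorial_pos n).ne'
      have hne4 : x + ((k+1:ℕ):ℚ) ≠ 0 := by
        have : (0:ℚ) < ((k+1:ℕ):ℚ) := by exact_mod_cast Nat.succ_pos k
        positivity
      field_simp
      linear_combination (-(poch ((k:ℚ)+2+x) (n-k-1) * poch ((n:ℚ)+1+x) (k+1))) * hf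
  · intro l hl hl0
    rw [Polynomial.eval_mul, Polynomial.eval_pow, Polynomial.eval_X, zero_pow hl0]
    ring
  · intro h
    rcases Nat.eq_zero_or_pos n with hn | hn
    · subst hn; simp
    · exact absurd (Finset.mem_range.mpr (by omega)) h

lemma detval_pos (x : ℚ) (hx : 0 < x) (n : ℕ) :
    (Qpoly x n).eval 0 * (Ppoly x (n+1)).eval 0 - (Ppoly x n).eval 0 * (Qpoly x (n+1)).eval 0
      = (1+x)*(x+2*n+2)/(((n:ℚ)+1)*(x+n+1)) := by
  rw [qEval, qEval, pEval x hx.le, pEval x hx.le, Gval n x hx, Gval (n+1) x hx]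
  have hp1 : poch (x+1) (n+1) = poch (x+1) n * (x+1+n) := poch_succ _ _
  have hf : ((n+1).factorial : ℚ) = (n.factorial:ℚ)*((n:ℚ)+1) := by
    rw [Nat.factorial_succ]; push_cast; ring
  have hp2 : (-1:ℚ)^(n+1) = -(-1:ℚ)^n := by rw [pow_succ]; ring
  rw [hp1, hf, hp2]
  have hP : (0:ℚ) < poch (x+1) n := poch_pos (by linarith) n
  have h1 : (0:ℚ) < x+1+(n:ℚ) := by positivity
  have h2 : ((n.factorial:ℚ)) ≠ 0 := by exact_mod_cast (Nat.factorial_pos n).ne'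
  have h3 : (0:ℚ) < (n:ℚ)+1 := by positivity
  rcases Nat.even_or_odd n with he | ho
  · rw [he.neg_one_pow]
    field_simp
    ring
  · rw [ho.neg_one_pow]
    field_simp
    ring

lemma detval_zero (n : ℕ) :
    (Qpoly 0 n).eval 0 * (Ppoly 0 (n+1)).eval 0 - (Ppoly 0 n).eval 0 * (Qpoly 0 (n+1)).eval 0
      = 2/((n:ℚ)+1) := by
  rw [qEval, qEval, pEval 0 le_rfl, pEval 0 le_rfl, Gval0, Gval0]
  have h01 : (0:ℚ) + 1 = 1 := by norm_num
  rw [h01, poch_one, poch_one]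
  simp only [div_zero, sub_zero]
  have hH : Hh (n+1) = Hh n + 1/((n:ℚ)+1) := rfl
  have hf : ((n+1).factorial : ℚ) = (n.factorial:ℚ)*((n:ℚ)+1) := by
    rw [Nat.factorial_succ]; push_cast; ring
  have hp2 : (-1:ℚ)^(n+1) = -(-1:ℚ)^n := by rw [pow_succ]; ring
  rw [hH, hf, hp2]
  have h2 : ((n.factorial:ℚ)) ≠ 0 := by exact_mod_cast (Nat.factorial_pos n).ne'
  have h3 : ((n:ℚ)+1) ≠ 0 := by positivity
  rcases Nat.even_or_odd n with he | ho
  · rw [he.neg_one_pow]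
    field_simp
    ring
  · rw [ho.neg_one_pow]
    field_simp
    ring

end

/-- For every `n ≥ 0` the determinant of the matrix with rows `(Q_n, P_n)` and
`(Q_{n+1}, P_{n+1})` is a nonzero polynomial in `z`. -/
theorem pade_determinant_ne_zero (x : ℚ) (hx0 : 0 ≤ x) (hx1 : x < 1) (n : ℕ) :
    (Matrix.of ![![Qpoly x n, Ppoly x n], ![Qpoly x (n + 1), Ppoly x (n + 1)]]).det ≠ 0 := by
  have hdet : (Matrix.of ![![Qpoly x n, Ppoly x n], ![Qpoly x (n + 1), Ppoly x (n + 1)]]).det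
      = Qpoly x n * Ppoly x (n+1) - Ppoly x n * Qpoly x (n+1) := by
    rw [Matrix.det_fin_two_of]
  rw [hdet]
  intro h
  have h0 := congrArg (Polynomial.eval 0) h
  simp only [Polynomial.eval_sub, Polynomial.eval_mul, Polynomial.eval_zero] at h0
  rcases hx0.eq_or_lt with hx | hx
  · rw [← hx] at h0
    rw [detval_zero n] at h0
    have hpos : (0:ℚ) < 2/((n:ℚ)+1) := by positivity
    rw [h0] at hpos
    exact lt_irrefl 0 hpos
  · rw [detval_pos x hx n] at h0
    have hpos : (0:ℚ) < (1+x)*(x+2*n+2)/(((n:ℚ)+1)*(x+n+1)) := by positivity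
    rw [h0] at hpos
    exact lt_irrefl 0 hpos

end
end

section
/- If z ∈ ℂ satisfies |z| > 1, then the polynomial P(X) = X² − 2(2z−1)X + 1 has two distinct simple roots, and their moduli ρ_1(z) ≤ ρ_2(z) satisfy ρ_1(z)·ρ_2(z) = 1 and the strict inequalities ρ_1(z) < 1 < ρ_2(z). -/
open Polynomial Filter

noncomputable section



/-- For `|z| > 1` the polynomial `P(X) = X² − 2(2z−1)X + 1` has two distinct simple roots,
whose moduli `ρ₁(z) ≤ ρ₂(z)` satisfy `ρ₁(z)·ρ₂(z) = 1` and `ρ₁(z) < 1 < ρ₂(z)`. -/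
theorem quadratic_roots_moduli (z : ℂ) (hz : 1 < ‖z‖) :
    ∃ r₁ r₂ : ℂ, r₁ ≠ r₂ ∧
      (Polynomial.X ^ 2 - Polynomial.C (2 * (2 * z - 1)) * Polynomial.X + 1 =
        (Polynomial.X - Polynomial.C r₁) * (Polynomial.X - Polynomial.C r₂)) ∧
      ‖r₁‖ * ‖r₂‖ = 1 ∧
      min (‖r₁‖) (‖r₂‖) < 1 ∧
      1 < max (‖r₁‖) (‖r₂‖) := by
  set w : ℂ := 2 * z - 1 with hw
  obtain ⟨s, hs⟩ := IsAlgClosed.exists_pow_nat_eq (w ^ 2 - 1) (n := 2) (by norm_num)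
  set r₁ : ℂ := w + s
  set r₂ : ℂ := w - s
  have hprod : r₁ * r₂ = 1 := by simp only [r₁, r₂]; linear_combination -hs
  have hsum : r₁ + r₂ = 2 * w := by simp only [r₁, r₂]; ring
  -- the key fact: |r₁| ≠ 1
  have habs : ‖r₁‖ ≠ 1 := by
    intro h1
    have hr0 : r₁ ≠ 0 := by
      intro h0; rw [h0] at h1; simp at h1
    have hconj : r₁ * (starRingEnd ℂ) r₁ = 1 := by
      rw [Complex.mul_conj, ← Complex.sq_norm, h1]; norm_num
    have hr2 : r₂ = (starRingEnd ℂ) r₁ :=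
      mul_left_cancel₀ hr0 (hprod.trans hconj.symm)
    have hre : (2 : ℂ) * w = 2 * (r₁.re : ℂ) := by
      rw [← hsum, hr2, Complex.add_conj]; push_cast; ring
    have hzre : z = (((r₁.re + 1) / 2 : ℝ) : ℂ) := by
      push_cast
      have : w = (r₁.re : ℂ) := by linear_combination hre / 2
      rw [hw] at this
      linear_combination this / 2
    rw [hzre, Complex.norm_real, Real.norm_eq_abs] at hz
    have h2 : |r₁.re| ≤ 1 := (Complex.abs_re_le_norm r₁).trans_eq h1
    have h3 := abs_le.mp h2
    rw [abs_of_nonneg (by linarith)] at hz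
    linarith
  refine ⟨r₁, r₂, ?_, ?_, ?_, ?_, ?_⟩
  · intro h
    have hs0 : s = 0 := by simp only [r₁, r₂] at h; linear_combination h / 2
    rw [hs0] at hs
    have : (w - 1) * (w + 1) = 0 := by linear_combination -hs
    rcases mul_eq_zero.mp this with h1 | h1
    · have : z = 1 := by rw [hw] at h1; linear_combination h1 / 2
      rw [this] at hz; simp at hz
    · have : z = 0 := by rw [hw] at h1; linear_combination h1 / 2
      rw [this] at hz; simp at hz; linarith
  · have hC : (Polynomial.X - Polynomial.C r₁) * (Polynomial.X - Polynomial.C r₂) =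
        Polynomial.X ^ 2 - (Polynomial.C r₁ + Polynomial.C r₂) * Polynomial.X +
          Polynomial.C r₁ * Polynomial.C r₂ := by ring
    rw [hC, ← map_add, ← map_mul, hsum, hprod, map_one]
  · rw [← norm_mul, hprod, norm_one]
  · have hp : ‖r₁‖ * ‖r₂‖ = 1 := by rw [← norm_mul, hprod, norm_one]
    have ha : 0 ≤ ‖r₁‖ := norm_nonneg _
    have hb : 0 ≤ ‖r₂‖ := norm_nonneg _
    rcases lt_or_gt_of_ne habs with h | h
    · exact lt_of_le_of_lt (min_le_left _ _) h
    · have : ‖r₂‖ < 1 := by nlinarith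
      exact lt_of_le_of_lt (min_le_right _ _) this
  · have hp : ‖r₁‖ * ‖r₂‖ = 1 := by rw [← norm_mul, hprod, norm_one]
    have ha : 0 ≤ ‖r₁‖ := norm_nonneg _
    have hb : 0 ≤ ‖r₂‖ := norm_nonneg _
    rcases lt_or_gt_of_ne habs with h | h
    · have : 1 < ‖r₂‖ := by nlinarith
      exact lt_of_lt_of_le this (le_max_right _ _)
    · exact lt_of_lt_of_le h (le_max_left _ _)

end
end

section
/- Let β be an algebraic number and x ∈ ℚ ∩ [0,1). With κ_n = den(x)·ν_n(x)·d_n(x)·den(β)ⁿ, the numbers κ_n·Q_n(β) and κ_n·P_n(β) are algebraic integers for every n ≥ 0. -/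
open Polynomial Filter

noncomputable section

/-- The Padé denominator polynomial `Q_n` evaluated at `z`. -/
def Qval (x : ℚ) (n : ℕ) (z : ℂ) : ℂ :=
  ∑ l ∈ Finset.range (n + 1),
    (((-1 : ℚ) ^ l * poch ((n : ℚ) + 1 + x) (n - l) / (Nat.factorial (n - l)) *
        poch (((n - l : ℕ) : ℚ) + 1 + x) l / (Nat.factorial l) : ℚ) : ℂ) * z ^ (n - l)

/-- The Padé numerator polynomial `P_n` evaluated at `z`. -/
def Pval (x : ℚ) (n : ℕ) (z : ℂ) : ℂ :=
  ∑ l ∈ Finset.range n,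
    ((∑ k ∈ Finset.Ico l n,
        (-1 : ℚ) ^ (n - k - 1) * poch ((n : ℚ) + 1 + x) (k + 1) / (Nat.factorial (k + 1)) *
          poch ((k : ℚ) + 2 + x) (n - k - 1) / (Nat.factorial (n - k - 1)) *
          (1 + x) / ((k : ℚ) - (l : ℚ) + 1 + x) : ℚ) : ℂ) * z ^ l

/-- `den(β)`: the least positive integer `m` such that `mβ` is an algebraic integer. -/
def denC (β : ℂ) : ℕ := sInf {m : ℕ | 0 < m ∧ IsIntegral ℤ ((m : ℂ) * β)}

/-- `d_n(x)`: the common denominator of `1/(1+x), …, 1/(n+x)`. -/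
def dnval (x : ℚ) (n : ℕ) : ℕ := (Finset.Icc 1 n).lcm fun j => (1 / ((j : ℚ) + x)).den

/-- `ν_n(x) = den(x)ⁿ·∏_{q prime, q ∣ den(x)} q^{⌊n/(q−1)⌋}`. -/
def nunval (x : ℚ) (n : ℕ) : ℕ :=
  x.den ^ n * ∏ q ∈ x.den.primeFactors, q ^ (n / (q - 1))

/-- `κ_n = den(x)·ν_n(x)·d_n(x)·den(β)ⁿ`. -/
def kappan (β : ℂ) (x : ℚ) (n : ℕ) : ℕ := x.den * nunval x n * dnval x n * denC β ^ n


namespace Aux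


open Nat Finset

lemma poch_eq_prod (a : ℚ) (m : ℕ) : poch a m = ∏ j ∈ Finset.range m, (a + j) := by
  induction m with
  | zero => simp [poch]
  | succ k ih =>
      rw [poch, ascPochhammer_succ_eval, ← poch, ih, Finset.prod_range_succ]

lemma prod_range_add (t m : ℕ) : ∏ j ∈ Finset.range m, (t + j) = t.ascFactorial m := by
  induction m with
  | zero => simp
  | succ k ih => rw [Finset.prod_range_succ, ih, Nat.ascFactorial_succ, mul_comm]

lemma fact_dvd_prod_range_add (t m : ℕ) : m ! ∣ ∏ j ∈ Finset.range m, (t + j) := by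
  rw [prod_range_add]; exact Nat.factorial_dvd_ascFactorial t m

lemma factorization_factorial_le (p m : ℕ) (hp : p.Prime) :
    (m !).factorization p ≤ m / (p - 1) := by
  haveI : Fact p.Prime := ⟨hp⟩
  have h2 := hp.two_le
  rw [Nat.factorization_def _ hp, Nat.le_div_iff_mul_le (by omega : 0 < p - 1), mul_comm]
  calc (p - 1) * padicValNat p (m !) = m - (p.digits m).sum :=
        sub_one_mul_padicValNat_factorial m
    _ ≤ m := Nat.sub_le _ _

lemma pow_dvd_ap_prod {p : ℕ} (hp : p.Prime) (b A s m : ℕ) (hpb : ¬ p ∣ b) :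
    p ^ ((m !).factorization p) ∣ ∏ j ∈ Finset.range m, (A + (s + j) * b) := by
  set q := p ^ ((m !).factorization p) with hq
  have hbq : Nat.Coprime b q := ((hp.coprime_iff_not_dvd.mpr hpb).symm).pow_right _
  haveI : NeZero q := ⟨pow_ne_zero _ hp.pos.ne'⟩
  have hbu : IsUnit (b : ZMod q) := (ZMod.isUnit_iff_coprime b q).mpr hbq
  set c := ((b : ZMod q)⁻¹ * (A : ZMod q)).val with hc
  rw [← ZMod.natCast_eq_zero_iff, Nat.cast_prod]
  have hkey : ∀ j ∈ Finset.range m, ((A + (s + j) * b : ℕ) : ZMod q)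
      = (b : ZMod q) * ((c + s + j : ℕ) : ZMod q) := by
    intro j _
    have h1 : (b : ZMod q) * (b : ZMod q)⁻¹ = 1 := ZMod.mul_inv_of_unit _ hbu
    push_cast
    rw [hc, ZMod.natCast_zmod_val]
    linear_combination (-(A : ZMod q)) * h1
  rw [Finset.prod_congr rfl hkey, Finset.prod_mul_distrib, Finset.prod_const,
    Finset.card_range, ← Nat.cast_prod]
  have hd : q ∣ ∏ j ∈ Finset.range m, (c + s + j) :=
    dvd_trans (hq ▸ Nat.ordProj_dvd (m !) p) (fact_dvd_prod_range_add (c + s) m)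
  rw [(ZMod.natCast_eq_zero_iff _ _).mpr hd, mul_zero]

lemma factorial_dvd_main (b A s m : ℕ) (hb : b ≠ 0) (hA : A.Coprime b) :
    m ! ∣ (∏ p ∈ b.primeFactors, p ^ (m / (p - 1))) *
      ∏ j ∈ Finset.range m, (A + (s + j) * b) := by
  set D := ∏ p ∈ b.primeFactors, p ^ (m / (p - 1)) with hD
  set P := ∏ j ∈ Finset.range m, (A + (s + j) * b) with hP
  have hdvd : ∀ p : ℕ, p.Prime → p ^ ((m !).factorization p) ∣ D * P := by
    intro p hp
    by_cases hpb : p ∣ b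
    · have hmem : p ∈ b.primeFactors := Nat.mem_primeFactors.mpr ⟨hp, hpb, hb⟩
      exact dvd_mul_of_dvd_left
        ((pow_dvd_pow p (factorization_factorial_le p m hp)).trans
          (Finset.dvd_prod_of_mem (fun p => p ^ (m / (p - 1))) hmem)) P
    · exact dvd_mul_of_dvd_right (pow_dvd_ap_prod hp b A s m hpb) D
  by_cases hP0 : P = 0
  · simp [hP0]
  have hD0 : D ≠ 0 := by
    rw [hD, Finset.prod_ne_zero_iff]
    exact fun p hpmem => pow_ne_zero _ (Nat.prime_of_mem_primeFactors hpmem).pos.ne'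
  rw [← Nat.factorization_le_iff_dvd (Nat.factorial_ne_zero m) (mul_ne_zero hD0 hP0),
    Finsupp.le_def]
  intro p
  by_cases hp : p.Prime
  · exact (Nat.Prime.pow_dvd_iff_le_factorization hp (mul_ne_zero hD0 hP0)).mp (hdvd p hp)
  · simp [Nat.factorization_eq_zero_of_not_prime _ hp]

lemma den_mul_self (r : ℚ) : (r.den : ℚ) * r = (r.num : ℚ) := by
  have h : (r.den : ℚ) ≠ 0 := Nat.cast_ne_zero.mpr r.den_nz
  rw [mul_comm, ← eq_div_iff h]
  exact (Rat.num_div_den r).symm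

lemma nun_single (x : ℚ) (hx : 0 ≤ x) (s m : ℕ) :
    ∃ N : ℕ, ((x.den ^ m * ∏ p ∈ x.den.primeFactors, p ^ (m / (p - 1)) : ℕ) : ℚ) *
      (poch ((s : ℚ) + x) m / (m ! : ℚ)) = (N : ℚ) := by
  set b := x.den with hb
  set A := x.num.natAbs with hA
  have hAZ : (A : ℤ) = x.num := Int.natAbs_of_nonneg (Rat.num_nonneg.mpr hx)
  have hAQ : (A : ℚ) = (x.num : ℚ) := by exact_mod_cast hAZ
  have hfac : ∀ j : ℕ, (b : ℚ) * ((s : ℚ) + x + j) = ((A + (s + j) * b : ℕ) : ℚ) := by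
    intro j
    have h1 := den_mul_self x
    push_cast [hAQ]
    linear_combination h1
  set P := ∏ j ∈ Finset.range m, (A + (s + j) * b) with hP
  set D := ∏ p ∈ b.primeFactors, p ^ (m / (p - 1)) with hD
  have hprod : ((b : ℚ)) ^ m * poch ((s : ℚ) + x) m = (P : ℚ) := by
    rw [poch_eq_prod, hP, Nat.cast_prod, ← Finset.prod_congr rfl (fun j _ => hfac j),
      Finset.prod_mul_distrib, Finset.prod_const, Finset.card_range]
  have hdvd : m ! ∣ D * P := factorial_dvd_main b A s m x.den_nz x.reduced
  refine ⟨D * P / m !, ?_⟩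
  have hm : (m ! : ℚ) ≠ 0 := Nat.cast_ne_zero.mpr (Nat.factorial_ne_zero m)
  rw [Nat.cast_div_charZero hdvd]
  field_simp
  push_cast
  linear_combination (D : ℚ) * hprod

lemma nun_split (x : ℚ) (m₁ m₂ : ℕ) :
    ∃ E : ℕ, nunval x (m₁ + m₂) =
      (x.den ^ m₁ * ∏ p ∈ x.den.primeFactors, p ^ (m₁ / (p - 1))) *
      (x.den ^ m₂ * ∏ p ∈ x.den.primeFactors, p ^ (m₂ / (p - 1))) * E := by
  have hdvd : (x.den ^ m₁ * ∏ p ∈ x.den.primeFactors, p ^ (m₁ / (p - 1))) *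
      (x.den ^ m₂ * ∏ p ∈ x.den.primeFactors, p ^ (m₂ / (p - 1))) ∣ nunval x (m₁ + m₂) := by
    unfold nunval
    have h1 : (x.den ^ m₁ * ∏ p ∈ x.den.primeFactors, p ^ (m₁ / (p - 1))) *
        (x.den ^ m₂ * ∏ p ∈ x.den.primeFactors, p ^ (m₂ / (p - 1)))
        = x.den ^ (m₁ + m₂) * ((∏ p ∈ x.den.primeFactors, p ^ (m₁ / (p - 1))) *
          ∏ p ∈ x.den.primeFactors, p ^ (m₂ / (p - 1))) := by
      rw [pow_add]; ring
    rw [h1]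
    apply mul_dvd_mul_left
    rw [← Finset.prod_mul_distrib]
    apply Finset.prod_dvd_prod_of_dvd
    intro p hp
    rw [← pow_add]
    apply pow_dvd_pow
    have h2 := (Nat.prime_of_mem_primeFactors hp).two_le
    rw [Nat.le_div_iff_mul_le (by omega : 0 < p - 1), add_mul]
    exact Nat.add_le_add (Nat.div_mul_le_self _ _) (Nat.div_mul_le_self _ _)
  obtain ⟨E, hE⟩ := hdvd
  exact ⟨E, hE⟩

lemma cast_combine {a₁ a₂ v E N₁ N₂ : ℕ} {q₁ q₂ : ℚ} (h₁ : (a₁ : ℚ) * q₁ = N₁)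
    (h₂ : (a₂ : ℚ) * q₂ = N₂) (hv : v = a₁ * a₂ * E) :
    (v : ℚ) * q₁ * q₂ = ((E * N₁ * N₂ : ℕ) : ℚ) := by
  subst hv
  push_cast
  linear_combination ((E : ℚ) * (a₂ : ℚ) * q₂) * h₁ + ((E : ℚ) * (N₁ : ℚ)) * h₂

lemma nun_pair (x : ℚ) (hx : 0 ≤ x) (s₁ s₂ m₁ m₂ : ℕ) :
    ∃ N : ℕ, (nunval x (m₁ + m₂) : ℚ) * (poch ((s₁ : ℚ) + x) m₁ / (m₁ ! : ℚ)) *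
      (poch ((s₂ : ℚ) + x) m₂ / (m₂ ! : ℚ)) = (N : ℚ) := by
  obtain ⟨N₁, h₁⟩ := nun_single x hx s₁ m₁
  obtain ⟨N₂, h₂⟩ := nun_single x hx s₂ m₂
  obtain ⟨E, hE⟩ := nun_split x m₁ m₂
  exact ⟨E * N₁ * N₂, cast_combine h₁ h₂ hE⟩

lemma den_dvd_mul_int (r : ℚ) (m : ℕ) (h : r.den ∣ m) : ∃ z : ℤ, (m : ℚ) * r = (z : ℚ) := by
  obtain ⟨t, ht⟩ := h
  refine ⟨r.num * t, ?_⟩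
  subst ht
  push_cast
  linear_combination (t : ℚ) * den_mul_self r



lemma intc (z : ℤ) : IsIntegral ℤ ((z : ℂ)) := by
  simpa using isIntegral_algebraMap (R := ℤ) (A := ℂ) (x := z)

lemma natc (m : ℕ) : IsIntegral ℤ ((m : ℂ)) := by
  have := intc (m : ℤ)
  simpa using this

lemma denC_spec (β : ℂ) (halg : IsAlgebraic ℚ β) :
    0 < denC β ∧ IsIntegral ℤ ((denC β : ℂ) * β) := by
  have halgZ : IsAlgebraic ℤ β := (IsFractionRing.isAlgebraic_iff ℤ ℚ ℂ).mpr halg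
  have inj : ∀ z : ℤ, algebraMap ℤ ℂ z = 0 → z = 0 := by
    intro z hz
    have h2 : ((z : ℤ) : ℂ) = 0 := by rw [← hz]; simp
    exact_mod_cast h2
  obtain ⟨y, hy, hint0⟩ := halgZ.exists_integral_multiple
  have hint : IsIntegral ℤ ((y : ℂ) * β) := by
    simpa [Algebra.smul_def] using hint0
  have hmem : y.natAbs ∈ {m : ℕ | 0 < m ∧ IsIntegral ℤ ((m : ℂ) * β)} := by
    refine ⟨Int.natAbs_pos.mpr hy, ?_⟩
    have h3 : ((y.natAbs : ℂ)) = ((|y| : ℤ) : ℂ) := by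
      rw [Int.abs_eq_natAbs, Int.cast_natCast]
    rcases abs_choice y with h | h
    · rw [h3, h]; exact hint
    · rw [h3, h, Int.cast_neg, neg_mul]; exact hint.neg
  have hs := Nat.sInf_mem (⟨_, hmem⟩ : Set.Nonempty {m : ℕ | 0 < m ∧ IsIntegral ℤ ((m : ℂ) * β)})
  exact hs

lemma sum_int_cast {s : Finset ℕ} {g : ℕ → ℚ} (h : ∀ k ∈ s, ∃ z : ℤ, g k = z) :
    ∃ z : ℤ, ∑ k ∈ s, g k = z := by
  classical
  induction s using Finset.induction_on with
  | empty => exact ⟨0, by simp⟩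
  | @insert a s' hx ih =>
      obtain ⟨z₁, h₁⟩ := h a (Finset.mem_insert_self a s')
      obtain ⟨z₂, h₂⟩ := ih fun k hk => h k (Finset.mem_insert_of_mem hk)
      exact ⟨z₁ + z₂, by rw [Finset.sum_insert hx, h₁, h₂]; push_cast; ring⟩


lemma Qcoef (x : ℚ) (hx : 0 ≤ x) (n l : ℕ) (hl : l ≤ n) :
    ∃ z : ℤ, (nunval x n : ℚ) *
      ((-1 : ℚ) ^ l * poch ((n : ℚ) + 1 + x) (n - l) / (Nat.factorial (n - l)) *
        poch (((n - l : ℕ) : ℚ) + 1 + x) l / (Nat.factorial l)) = (z : ℚ) := by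
  obtain ⟨N, hN⟩ := nun_pair x hx (n + 1) (n - l + 1) (n - l) l
  rw [show n - l + l = n from Nat.sub_add_cancel hl] at hN
  have e1 : (((n + 1 : ℕ)) : ℚ) + x = (n : ℚ) + 1 + x := by push_cast; ring
  have e2 : (((n - l + 1 : ℕ)) : ℚ) + x = ((n - l : ℕ) : ℚ) + 1 + x := by push_cast; ring
  rw [e1, e2] at hN
  refine ⟨(-1) ^ l * N, ?_⟩
  push_cast
  linear_combination ((-1 : ℚ) ^ l) * hN

lemma Pterm (x : ℚ) (hx0 : 0 ≤ x) (n l k : ℕ) (hlk : l ≤ k) (hkn : k < n) :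
    ∃ z : ℤ, ((x.den * nunval x n * dnval x n : ℕ) : ℚ) *
      ((-1 : ℚ) ^ (n - k - 1) * poch ((n : ℚ) + 1 + x) (k + 1) / (Nat.factorial (k + 1)) *
        poch ((k : ℚ) + 2 + x) (n - k - 1) / (Nat.factorial (n - k - 1)) *
        (1 + x) / ((k : ℚ) - (l : ℚ) + 1 + x)) = (z : ℚ) := by
  obtain ⟨N, hN⟩ := nun_pair x hx0 (n + 1) (k + 2) (k + 1) (n - k - 1)
  rw [show k + 1 + (n - k - 1) = n from by omega] at hN
  have e1 : (((n + 1 : ℕ)) : ℚ) + x = (n : ℚ) + 1 + x := by push_cast; ring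
  have e2 : (((k + 2 : ℕ)) : ℚ) + x = (k : ℚ) + 2 + x := by push_cast; ring
  rw [e1, e2] at hN
  have hjk : (k : ℚ) - (l : ℚ) + 1 + x = ((k - l + 1 : ℕ) : ℚ) + x := by
    push_cast [Nat.cast_sub hlk]; ring
  have hjmem : k - l + 1 ∈ Finset.Icc 1 n := by rw [Finset.mem_Icc]; omega
  have hdvd : (1 / (((k - l + 1 : ℕ) : ℚ) + x)).den ∣ dnval x n := Finset.dvd_lcm hjmem
  obtain ⟨z₁, hz₁⟩ := den_dvd_mul_int _ _ hdvd
  have hw : (x.den : ℚ) * (1 + x) = (x.den : ℚ) + (x.num : ℚ) := by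
    linear_combination den_mul_self x
  refine ⟨(-1) ^ (n - k - 1) * N * ((x.den : ℤ) + x.num) * z₁, ?_⟩
  rw [hjk]
  push_cast at hz₁ ⊢
  linear_combination ((-1 : ℚ) ^ (n - k - 1)) *
    ( (((x.den : ℚ)) * (1 + x)) * ((dnval x n : ℚ) * (((k - l : ℕ) : ℚ) + 1 + x)⁻¹) * hN
      + (N : ℚ) * ((dnval x n : ℚ) * (((k - l : ℕ) : ℚ) + 1 + x)⁻¹) * hw
      + (N : ℚ) * (((x.den : ℚ)) + (x.num : ℚ)) * hz₁ )

lemma Pcoef (x : ℚ) (hx0 : 0 ≤ x) (n l : ℕ) (hl : l < n) :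
    ∃ z : ℤ, ((x.den * nunval x n * dnval x n : ℕ) : ℚ) *
      (∑ k ∈ Finset.Ico l n,
        (-1 : ℚ) ^ (n - k - 1) * poch ((n : ℚ) + 1 + x) (k + 1) / (Nat.factorial (k + 1)) *
          poch ((k : ℚ) + 2 + x) (n - k - 1) / (Nat.factorial (n - k - 1)) *
          (1 + x) / ((k : ℚ) - (l : ℚ) + 1 + x)) = (z : ℚ) := by
  rw [Finset.mul_sum]
  apply sum_int_cast
  intro k hk
  rw [Finset.mem_Ico] at hk
  exact Pterm x hx0 n l k hk.1 hk.2

end Aux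

/-- With `κ_n = den(x)·ν_n(x)·d_n(x)·den(β)ⁿ`, the numbers `κ_n·Q_n(β)` and `κ_n·P_n(β)`
are algebraic integers for every `n ≥ 0`. -/
theorem denominators_clear (x : ℚ) (hx0 : 0 ≤ x) (hx1 : x < 1)
    (β : ℂ) (halg : IsAlgebraic ℚ β) (n : ℕ) :
    IsIntegral ℤ ((kappan β x n : ℂ) * Qval x n β) ∧
      IsIntegral ℤ ((kappan β x n : ℂ) * Pval x n β) := by
  obtain ⟨hd0, hdint⟩ := Aux.denC_spec β halg
  constructor
  · rw [Qval, Finset.mul_sum]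
    refine IsIntegral.sum _ fun l hl => ?_
    have hln : l ≤ n := Nat.lt_succ_iff.mp (Finset.mem_range.mp hl)
    obtain ⟨z, hz⟩ := Aux.Qcoef x hx0 n l hln
    have hzc := congrArg (fun q : ℚ => (q : ℂ)) hz
    push_cast at hzc
    have hpow : ((denC β : ℂ)) ^ n = (denC β : ℂ) ^ l * (denC β : ℂ) ^ (n - l) := by
      rw [← pow_add, Nat.add_sub_cancel' hln]
    rw [show (kappan β x n : ℂ) *
        ((((-1 : ℚ) ^ l * poch ((n : ℚ) + 1 + x) (n - l) / (Nat.factorial (n - l)) *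
          poch (((n - l : ℕ) : ℚ) + 1 + x) l / (Nat.factorial l) : ℚ) : ℂ) * β ^ (n - l)) =
        ((x.den * dnval x n : ℕ) : ℂ) * ((denC β : ℂ)) ^ l * ((z : ℤ) : ℂ) *
          (((denC β : ℂ)) * β) ^ (n - l) from ?_]
    · exact (((Aux.natc _).mul ((Aux.natc _).pow l)).mul (Aux.intc z)).mul (hdint.pow (n - l))
    · simp only [kappan]
      push_cast
      rw [hpow, mul_pow]
      linear_combination ((x.den : ℂ) * (dnval x n : ℂ) * (denC β : ℂ) ^ l *
        (denC β : ℂ) ^ (n - l) * β ^ (n - l)) * hzc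
  · rw [Pval, Finset.mul_sum]
    refine IsIntegral.sum _ fun l hl => ?_
    have hln : l < n := Finset.mem_range.mp hl
    obtain ⟨z, hz⟩ := Aux.Pcoef x hx0 n l hln
    have hzc := congrArg (fun q : ℚ => (q : ℂ)) hz
    push_cast at hzc
    have hpow : ((denC β : ℂ)) ^ n = (denC β : ℂ) ^ (n - l) * (denC β : ℂ) ^ l := by
      rw [← pow_add, Nat.sub_add_cancel hln.le]
    rw [show (kappan β x n : ℂ) *
        (((∑ k ∈ Finset.Ico l n,
          (-1 : ℚ) ^ (n - k - 1) * poch ((n : ℚ) + 1 + x) (k + 1) / (Nat.factorial (k + 1)) *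
            poch ((k : ℚ) + 2 + x) (n - k - 1) / (Nat.factorial (n - k - 1)) *
            (1 + x) / ((k : ℚ) - (l : ℚ) + 1 + x) : ℚ) : ℂ) * β ^ l) =
        ((denC β : ℂ)) ^ (n - l) * ((z : ℤ) : ℂ) * (((denC β : ℂ)) * β) ^ l from ?_]
    · exact (((Aux.natc _).pow (n - l)).mul (Aux.intc z)).mul (hdint.pow l)
    · simp only [kappan]
      push_cast
      rw [hpow, mul_pow]
      linear_combination ((denC β : ℂ) ^ (n - l) * (denC β : ℂ) ^ l * β ^ l) * hzc


end
end
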